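/- Let x₁,…,xₙ ∈ ℝ^p and y₁,…,yₙ ∈ ℝ^q. Then min over π ∈ Πₙ of ∑_{i,j,k,l} (‖x_i − x_k‖² − ‖y_j − y_l‖²)² π_{ij} π_{kl} equals min over permutations σ of {1,…,n} of (1/n²) ∑_{i,k=1}^n (‖x_i − x_k‖² − ‖y_{σ(i)} − y_{σ(k)}‖²)², where ‖·‖ denotes the Euclidean norm in ℝ^p and ℝ^q respectively. In other words, for uniform discrete measures with squared Euclidean costs, the Gromov-Wasserstein minimum over couplings equals the Gromov-Monge minimum over permutations. -/

import Mathlib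

open Finset

section helpers
variable {α β γ δ' ε ζ : Type*} [Fintype α] [Fintype β] [Fintype γ] [Fintype δ'] [Fintype ε] [Fintype ζ]

lemma sum_rot3 (h : α → β → γ → ℝ) :
    ∑ a, ∑ b, ∑ c, h a b c = ∑ b, ∑ c, ∑ a, h a b c := by
  rw [Finset.sum_comm]; exact Finset.sum_congr rfl fun b _ => Finset.sum_comm

lemma sum_rot4 (h : α → β → γ → δ' → ℝ) :
    ∑ a, ∑ b, ∑ c, ∑ d, h a b c d = ∑ b, ∑ c, ∑ d, ∑ a, h a b c d := by
  rw [Finset.sum_comm]; exact Finset.sum_congr rfl fun b _ => sum_rot3 _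

lemma sum_rot5 (h : α → β → γ → δ' → ε → ℝ) :
    ∑ a, ∑ b, ∑ c, ∑ d, ∑ e, h a b c d e = ∑ b, ∑ c, ∑ d, ∑ e, ∑ a, h a b c d e := by
  rw [Finset.sum_comm]; exact Finset.sum_congr rfl fun b _ => sum_rot4 _

lemma sum_rot6 (h : α → β → γ → δ' → ε → ζ → ℝ) :
    ∑ a, ∑ b, ∑ c, ∑ d, ∑ e, ∑ f, h a b c d e f
      = ∑ b, ∑ c, ∑ d, ∑ e, ∑ f, ∑ a, h a b c d e f := by
  rw [Finset.sum_comm]; exact Finset.sum_congr rfl fun b _ => sum_rot5 _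

lemma sum_swap_blocks (h : α → β → γ → δ' → ℝ) :
    ∑ a, ∑ b, ∑ c, ∑ d, h a b c d = ∑ c, ∑ d, ∑ a, ∑ b, h a b c d := by
  rw [sum_rot4]; rw [sum_rot4 (fun b c d a => h a b c d)]

lemma sum_pull2of6 (h : α → β → γ → δ' → ε → ζ → ℝ) :
    ∑ a, ∑ b, ∑ c, ∑ d, ∑ e, ∑ f, h a b c d e f
      = ∑ e, ∑ f, ∑ a, ∑ b, ∑ c, ∑ d, h a b c d e f := by
  rw [sum_rot6, sum_rot6 (fun b c d e f a => h a b c d e f),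
      sum_rot6 (fun c d e f a b => h a b c d e f),
      sum_rot6 (fun d e f a b c => h a b c d e f)]

lemma sum_factor {n : ℕ} (f g : Fin n → Fin n → ℝ) :
    ∑ i, ∑ j, ∑ k, ∑ l, f i j * g k l = (∑ i, ∑ j, f i j) * (∑ k, ∑ l, g k l) := by
  simp only [Finset.sum_mul, Finset.mul_sum]
  rw [sum_swap_blocks (fun k l i j => f i j * g k l)]

end helpers

section vanish
variable {n : ℕ} (δ : Fin n → Fin n → ℝ)

lemma vanish1 (hr : ∀ i, ∑ j, δ i j = 0) (F : Fin n → Fin n → Fin n → ℝ) :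
    ∑ i, ∑ j, ∑ k, ∑ l, F i j k * δ i j * δ k l = 0 := by
  have h : ∀ i j k, ∑ l, F i j k * δ i j * δ k l = 0 := by
    intro i j k; rw [← Finset.mul_sum, hr k, mul_zero]
  simp [h]

lemma vanish2 (hc : ∀ j, ∑ i, δ i j = 0) (F : Fin n → Fin n → Fin n → ℝ) :
    ∑ i, ∑ j, ∑ k, ∑ l, F i j l * δ i j * δ k l = 0 := by
  have h : ∀ i j, ∑ k, ∑ l, F i j l * δ i j * δ k l = 0 := by
    intro i j
    rw [Finset.sum_comm]
    have : ∀ l, ∑ k, F i j l * δ i j * δ k l = 0 := by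
      intro l
      have : ∑ k, F i j l * δ i j * δ k l = (F i j l * δ i j) * ∑ k, δ k l := by
        rw [Finset.mul_sum]
      rw [this, hc l, mul_zero]
    simp [this]
  simp [h]

lemma vanish3 (hr : ∀ i, ∑ j, δ i j = 0) (F : Fin n → Fin n → Fin n → ℝ) :
    ∑ i, ∑ j, ∑ k, ∑ l, F i k l * δ i j * δ k l = 0 := by
  have h : ∀ i, ∑ j, ∑ k, ∑ l, F i k l * δ i j * δ k l = 0 := by
    intro i
    rw [sum_rot3 (fun j k l => F i k l * δ i j * δ k l)]
    have : ∀ k l, ∑ j, F i k l * δ i j * δ k l = 0 := by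
      intro k l
      have : ∑ j, F i k l * δ i j * δ k l = (F i k l * δ k l) * ∑ j, δ i j := by
        rw [Finset.mul_sum]; exact Finset.sum_congr rfl fun j _ => by ring
      rw [this, hr i, mul_zero]
    simp [this]
  simp [h]

lemma vanish4 (hc : ∀ j, ∑ i, δ i j = 0) (F : Fin n → Fin n → Fin n → ℝ) :
    ∑ i, ∑ j, ∑ k, ∑ l, F j k l * δ i j * δ k l = 0 := by
  rw [sum_rot4 (fun i j k l => F j k l * δ i j * δ k l)]
  have h : ∀ j k l, ∑ i, F j k l * δ i j * δ k l = 0 := by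
    intro j k l
    have : ∑ i, F j k l * δ i j * δ k l = (F j k l * δ k l) * ∑ i, δ i j := by
      rw [Finset.mul_sum]; exact Finset.sum_congr rfl fun i _ => by ring
    rw [this, hc j, mul_zero]
  simp [h]

end vanish

lemma sqdist_expand {n p : ℕ} (X : Fin n → Fin p → ℝ) (i k : Fin n) :
    ∑ α, (X i α - X k α) ^ 2
      = (∑ α, X i α ^ 2) + (∑ α, X k α ^ 2) - 2 * ∑ α, X i α * X k α := by
  rw [Finset.mul_sum, ← Finset.sum_add_distrib, ← Finset.sum_sub_distrib]
  exact Finset.sum_congr rfl fun α _ => by ring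

lemma key_neg {n p q : ℕ} (X : Fin n → Fin p → ℝ) (Y : Fin n → Fin q → ℝ)
    (δ : Fin n → Fin n → ℝ) (hr : ∀ i, ∑ j, δ i j = 0) (hc : ∀ j, ∑ i, δ i j = 0) :
    ∑ i, ∑ j, ∑ k, ∑ l,
      ((∑ α, (X i α - X k α) ^ 2) - (∑ β, (Y j β - Y l β) ^ 2)) ^ 2 * δ i j * δ k l ≤ 0 := by
  set A : Fin n → ℝ := fun i => ∑ α, X i α ^ 2 with hA
  set B : Fin n → ℝ := fun j => ∑ β, Y j β ^ 2 with hB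
  set s : Fin n → Fin n → ℝ := fun i k => ∑ α, X i α * X k α with hs
  set t : Fin n → Fin n → ℝ := fun j l => ∑ β, Y j β * Y l β with ht
  -- the four "killable" buckets
  set F1 : Fin n → Fin n → Fin n → ℝ := fun i j k =>
    A i ^ 2 + A k ^ 2 + B j ^ 2 + 4 * s i k ^ 2 + 2 * A i * A k - 2 * A i * B j
      - 4 * A i * s i k - 2 * A k * B j - 4 * A k * s i k + 4 * B j * s i k with hF1
  set F2 : Fin n → Fin n → Fin n → ℝ := fun i j l =>
    B l ^ 2 + 4 * t j l ^ 2 - 2 * A i * B l + 4 * A i * t j l + 2 * B j * B l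
      - 4 * B j * t j l with hF2
  set F3 : Fin n → Fin n → Fin n → ℝ := fun i k l =>
    -2 * A k * B l + 4 * B l * s i k with hF3
  set F4 : Fin n → Fin n → Fin n → ℝ := fun j k l =>
    4 * A k * t j l - 4 * B l * t j l with hF4
  have hpt : ∀ i j k l : Fin n,
      ((∑ α, (X i α - X k α) ^ 2) - (∑ β, (Y j β - Y l β) ^ 2)) ^ 2 * δ i j * δ k l
        = F1 i j k * δ i j * δ k l + F2 i j l * δ i j * δ k l + F3 i k l * δ i j * δ k l
          + F4 j k l * δ i j * δ k l + (-8 * (s i k * t j l)) * δ i j * δ k l := by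
    intro i j k l
    rw [sqdist_expand X i k, sqdist_expand Y j l]
    simp only [hA, hB, hs, ht, hF1, hF2, hF3, hF4]
    ring
  calc ∑ i, ∑ j, ∑ k, ∑ l,
        ((∑ α, (X i α - X k α) ^ 2) - (∑ β, (Y j β - Y l β) ^ 2)) ^ 2 * δ i j * δ k l
      = ∑ i, ∑ j, ∑ k, ∑ l, (F1 i j k * δ i j * δ k l + F2 i j l * δ i j * δ k l
          + F3 i k l * δ i j * δ k l + F4 j k l * δ i j * δ k l
          + (-8 * (s i k * t j l)) * δ i j * δ k l) := by
        exact Finset.sum_congr rfl fun i _ => Finset.sum_congr rfl fun j _ =>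
          Finset.sum_congr rfl fun k _ => Finset.sum_congr rfl fun l _ => hpt i j k l
    _ = (∑ i, ∑ j, ∑ k, ∑ l, F1 i j k * δ i j * δ k l)
        + (∑ i, ∑ j, ∑ k, ∑ l, F2 i j l * δ i j * δ k l)
        + (∑ i, ∑ j, ∑ k, ∑ l, F3 i k l * δ i j * δ k l)
        + (∑ i, ∑ j, ∑ k, ∑ l, F4 j k l * δ i j * δ k l)
        + (∑ i, ∑ j, ∑ k, ∑ l, (-8 * (s i k * t j l)) * δ i j * δ k l) := by
        simp only [Finset.sum_add_distrib]
    _ = (-8) * ∑ i, ∑ j, ∑ k, ∑ l, (s i k * t j l) * δ i j * δ k l := by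
        rw [vanish1 δ hr F1, vanish2 δ hc F2, vanish3 δ hr F3, vanish4 δ hc F4]
        simp only [Finset.mul_sum]
        ring_nf
    _ = (-8) * ∑ α, ∑ β, (∑ i, ∑ j, X i α * Y j β * δ i j) ^ 2 := by
        congr 1
        have hpt2 : ∀ i j k l : Fin n, (s i k * t j l) * δ i j * δ k l
            = ∑ α, ∑ β, (X i α * Y j β * δ i j) * (X k α * Y l β * δ k l) := by
          intro i j k l
          rw [hs, ht, Finset.sum_mul_sum]
          simp only [Finset.sum_mul]
          exact Finset.sum_congr rfl fun α _ => Finset.sum_congr rfl fun β _ => by ring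
        calc ∑ i, ∑ j, ∑ k, ∑ l, (s i k * t j l) * δ i j * δ k l
            = ∑ i, ∑ j, ∑ k, ∑ l, ∑ α, ∑ β,
                (X i α * Y j β * δ i j) * (X k α * Y l β * δ k l) := by
              exact Finset.sum_congr rfl fun i _ => Finset.sum_congr rfl fun j _ =>
                Finset.sum_congr rfl fun k _ => Finset.sum_congr rfl fun l _ => hpt2 i j k l
          _ = ∑ α, ∑ β, ∑ i, ∑ j, ∑ k, ∑ l,
                (X i α * Y j β * δ i j) * (X k α * Y l β * δ k l) := by
              exact sum_pull2of6 _
          _ = ∑ α, ∑ β, (∑ i, ∑ j, X i α * Y j β * δ i j) ^ 2 := by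
              refine Finset.sum_congr rfl fun α _ => Finset.sum_congr rfl fun β _ => ?_
              rw [sum_factor, sq]
    _ ≤ 0 := by
        have : 0 ≤ ∑ α, ∑ β, (∑ i, ∑ j, X i α * Y j β * δ i j) ^ 2 :=
          Finset.sum_nonneg fun α _ => Finset.sum_nonneg fun β _ => sq_nonneg _
        nlinarith

section quad
variable {n : ℕ} {ι : Type*} [Fintype ι]

lemma quad_symm (c : Fin n → Fin n → Fin n → Fin n → ℝ)
    (hsymm : ∀ i j k l, c k l i j = c i j k l) (ρ μ : Fin n → Fin n → ℝ) :
    ∑ i, ∑ j, ∑ k, ∑ l, c i j k l * ρ i j * μ k l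
      = ∑ i, ∑ j, ∑ k, ∑ l, c i j k l * μ i j * ρ k l := by
  rw [sum_swap_blocks (fun i j k l => c i j k l * ρ i j * μ k l)]
  exact Finset.sum_congr rfl fun i _ => Finset.sum_congr rfl fun j _ =>
    Finset.sum_congr rfl fun k _ => Finset.sum_congr rfl fun l _ => by
      rw [hsymm]; ring

lemma quad_mix (c : Fin n → Fin n → Fin n → Fin n → ℝ)
    (w : ι → ℝ) (ρ : ι → Fin n → Fin n → ℝ) (π : Fin n → Fin n → ℝ)
    (hπ : ∀ i j, π i j = ∑ σ, w σ * ρ σ i j) :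
    ∑ i, ∑ j, ∑ k, ∑ l, c i j k l * π i j * π k l
      = ∑ σ, ∑ τ, w σ * w τ * ∑ i, ∑ j, ∑ k, ∑ l, c i j k l * ρ σ i j * ρ τ k l := by
  have hpt : ∀ i j k l, c i j k l * π i j * π k l
      = ∑ σ, ∑ τ, w σ * w τ * (c i j k l * ρ σ i j * ρ τ k l) := by
    intro i j k l
    rw [hπ, hπ]
    simp only [Finset.mul_sum, Finset.sum_mul]
    rw [Finset.sum_comm]
    exact Finset.sum_congr rfl fun σ _ => Finset.sum_congr rfl fun τ _ => by ring
  calc ∑ i, ∑ j, ∑ k, ∑ l, c i j k l * π i j * π k l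
      = ∑ i, ∑ j, ∑ k, ∑ l, ∑ σ, ∑ τ, w σ * w τ * (c i j k l * ρ σ i j * ρ τ k l) :=
        Finset.sum_congr rfl fun i _ => Finset.sum_congr rfl fun j _ =>
          Finset.sum_congr rfl fun k _ => Finset.sum_congr rfl fun l _ => hpt i j k l
    _ = ∑ σ, ∑ τ, ∑ i, ∑ j, ∑ k, ∑ l, w σ * w τ * (c i j k l * ρ σ i j * ρ τ k l) :=
        sum_pull2of6 _
    _ = ∑ σ, ∑ τ, w σ * w τ * ∑ i, ∑ j, ∑ k, ∑ l, c i j k l * ρ σ i j * ρ τ k l := by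
        simp only [← Finset.mul_sum]

lemma quad_diff (c : Fin n → Fin n → Fin n → Fin n → ℝ) (ρ μ : Fin n → Fin n → ℝ) :
    ∑ i, ∑ j, ∑ k, ∑ l, c i j k l * (ρ i j - μ i j) * (ρ k l - μ k l)
      = (∑ i, ∑ j, ∑ k, ∑ l, c i j k l * ρ i j * ρ k l)
        - (∑ i, ∑ j, ∑ k, ∑ l, c i j k l * ρ i j * μ k l)
        - (∑ i, ∑ j, ∑ k, ∑ l, c i j k l * μ i j * ρ k l)
        + (∑ i, ∑ j, ∑ k, ∑ l, c i j k l * μ i j * μ k l) := by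
  have hpt : ∀ i j k l, c i j k l * (ρ i j - μ i j) * (ρ k l - μ k l)
      = c i j k l * ρ i j * ρ k l - c i j k l * ρ i j * μ k l
        - c i j k l * μ i j * ρ k l + c i j k l * μ i j * μ k l := fun i j k l => by ring
  calc ∑ i, ∑ j, ∑ k, ∑ l, c i j k l * (ρ i j - μ i j) * (ρ k l - μ k l)
      = ∑ i, ∑ j, ∑ k, ∑ l, (c i j k l * ρ i j * ρ k l - c i j k l * ρ i j * μ k l
          - c i j k l * μ i j * ρ k l + c i j k l * μ i j * μ k l) :=
        Finset.sum_congr rfl fun i _ => Finset.sum_congr rfl fun j _ =>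
          Finset.sum_congr rfl fun k _ => Finset.sum_congr rfl fun l _ => hpt i j k l
    _ = _ := by simp only [Finset.sum_add_distrib, Finset.sum_sub_distrib]

lemma jensen_quad (c : Fin n → Fin n → Fin n → Fin n → ℝ)
    (hsymm : ∀ i j k l, c k l i j = c i j k l)
    (hneg : ∀ δ : Fin n → Fin n → ℝ, (∀ i, ∑ j, δ i j = 0) → (∀ j, ∑ i, δ i j = 0) →
      ∑ i, ∑ j, ∑ k, ∑ l, c i j k l * δ i j * δ k l ≤ 0)
    (w : ι → ℝ) (hw : ∀ σ, 0 ≤ w σ) (hw1 : ∑ σ, w σ = 1)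
    (ρ : ι → Fin n → Fin n → ℝ)
    (hρr : ∀ σ i, ∑ j, ρ σ i j = 1 / n) (hρc : ∀ σ j, ∑ i, ρ σ i j = 1 / n)
    (π : Fin n → Fin n → ℝ) (hπ : ∀ i j, π i j = ∑ σ, w σ * ρ σ i j) :
    ∑ σ, w σ * (∑ i, ∑ j, ∑ k, ∑ l, c i j k l * ρ σ i j * ρ σ k l)
      ≤ ∑ i, ∑ j, ∑ k, ∑ l, c i j k l * π i j * π k l := by
  set BB : ι → ι → ℝ := fun σ τ => ∑ i, ∑ j, ∑ k, ∑ l, c i j k l * ρ σ i j * ρ τ k l with hBB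
  have hBsymm : ∀ σ τ, BB σ τ = BB τ σ := fun σ τ => quad_symm c hsymm (ρ σ) (ρ τ)
  have hD : ∀ σ τ : ι, BB σ σ - BB σ τ - BB τ σ + BB τ τ ≤ 0 := by
    intro σ τ
    rw [← quad_diff c (ρ σ) (ρ τ)]
    refine hneg _ (fun i => ?_) (fun j => ?_)
    · rw [Finset.sum_sub_distrib, hρr σ i, hρr τ i, sub_self]
    · rw [Finset.sum_sub_distrib, hρc σ j, hρc τ j, sub_self]
  have h1 : ∑ i, ∑ j, ∑ k, ∑ l, c i j k l * π i j * π k l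
      = ∑ σ, ∑ τ, w σ * w τ * BB σ τ := quad_mix c w ρ π hπ
  have hS : ∑ σ, ∑ τ, w σ * w τ * (BB σ σ - BB σ τ - BB τ σ + BB τ τ) ≤ 0 :=
    Finset.sum_nonpos fun σ _ => Finset.sum_nonpos fun τ _ =>
      mul_nonpos_of_nonneg_of_nonpos (mul_nonneg (hw σ) (hw τ)) (hD σ τ)
  have hSeq : ∑ σ, ∑ τ, w σ * w τ * (BB σ σ - BB σ τ - BB τ σ + BB τ τ)
      = 2 * (∑ σ, w σ * BB σ σ) - 2 * (∑ σ, ∑ τ, w σ * w τ * BB σ τ) := by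
    have e1 : ∀ σ τ : ι, w σ * w τ * (BB σ σ - BB σ τ - BB τ σ + BB τ τ)
        = w σ * w τ * BB σ σ - w σ * w τ * BB σ τ - w σ * w τ * BB τ σ
          + w σ * w τ * BB τ τ := fun σ τ => by ring
    simp only [e1, Finset.sum_add_distrib, Finset.sum_sub_distrib]
    have t1 : ∀ σ : ι, ∑ τ : ι, w σ * w τ * BB σ σ = w σ * BB σ σ := by
      intro σ
      calc ∑ τ : ι, w σ * w τ * BB σ σ = ∑ τ : ι, (w σ * BB σ σ) * w τ :=
            Finset.sum_congr rfl fun τ _ => mul_right_comm _ _ _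
        _ = (w σ * BB σ σ) * ∑ τ : ι, w τ := by rw [← Finset.mul_sum]
        _ = w σ * BB σ σ := by rw [hw1, mul_one]
    have t4 : ∑ σ : ι, ∑ τ : ι, w σ * w τ * BB τ τ = ∑ σ : ι, w σ * BB σ σ := by
      rw [Finset.sum_comm]
      refine Finset.sum_congr rfl fun τ _ => ?_
      calc ∑ σ : ι, w σ * w τ * BB τ τ = ∑ σ : ι, (w τ * BB τ τ) * w σ :=
            Finset.sum_congr rfl fun σ _ => by rw [mul_comm (w σ) (w τ), mul_assoc, mul_comm (w σ) (BB τ τ), ← mul_assoc]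
        _ = (w τ * BB τ τ) * ∑ σ : ι, w σ := by rw [← Finset.mul_sum]
        _ = w τ * BB τ τ := by rw [hw1, mul_one]
    have t3 : ∑ σ : ι, ∑ τ : ι, w σ * w τ * BB τ σ = ∑ σ : ι, ∑ τ : ι, w σ * w τ * BB σ τ :=
      Finset.sum_congr rfl fun σ _ => Finset.sum_congr rfl fun τ _ => by rw [hBsymm]
    rw [Finset.sum_congr rfl fun σ _ => t1 σ, t4, t3]
    ring
  linarith [hS, hSeq, h1]

end quad

noncomputable def permCoup (n : ℕ) (σ : Equiv.Perm (Fin n)) : Fin n → Fin n → ℝ :=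
  fun i j => if σ i = j then (n : ℝ)⁻¹ else 0

lemma permCoup_nonneg {n : ℕ} (σ : Equiv.Perm (Fin n)) (i j : Fin n) :
    0 ≤ permCoup n σ i j := by
  unfold permCoup; positivity

lemma permCoup_row {n : ℕ} (σ : Equiv.Perm (Fin n)) (i : Fin n) :
    ∑ j, permCoup n σ i j = 1 / n := by
  simp [permCoup, Finset.sum_ite_eq, one_div]

lemma permCoup_col {n : ℕ} (σ : Equiv.Perm (Fin n)) (j : Fin n) :
    ∑ i, permCoup n σ i j = 1 / n := by
  unfold permCoup
  rw [← Equiv.sum_comp σ.symm (fun i => if σ i = j then (n:ℝ)⁻¹ else 0)]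
  simp [one_div]

lemma permCoup_f {n : ℕ} (c : Fin n → Fin n → Fin n → Fin n → ℝ) (σ : Equiv.Perm (Fin n)) :
    ∑ i, ∑ j, ∑ k, ∑ l, c i j k l * permCoup n σ i j * permCoup n σ k l
      = (1 / (n : ℝ) ^ 2) * ∑ i, ∑ k, c i (σ i) k (σ k) := by
  have hpos : ∀ k : Fin n, permCoup n σ k (σ k) = (n : ℝ)⁻¹ := fun k => if_pos rfl
  have hzero : ∀ k l : Fin n, l ≠ σ k → permCoup n σ k l = 0 :=
    fun k l hl => if_neg (fun h => hl h.symm)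
  have stepl : ∀ i j k : Fin n, ∑ l, c i j k l * permCoup n σ i j * permCoup n σ k l
      = c i j k (σ k) * permCoup n σ i j * (n : ℝ)⁻¹ := by
    intro i j k
    rw [Finset.sum_eq_single (σ k)]
    · rw [hpos k]
    · intro l _ hl; rw [hzero k l hl, mul_zero]
    · intro h; exact absurd (Finset.mem_univ _) h
  have stepj : ∀ i : Fin n, ∑ j, ∑ k, c i j k (σ k) * permCoup n σ i j * (n : ℝ)⁻¹
      = ∑ k, c i (σ i) k (σ k) * (n : ℝ)⁻¹ * (n : ℝ)⁻¹ := by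
    intro i
    rw [Finset.sum_eq_single (σ i)]
    · exact Finset.sum_congr rfl fun k _ => by rw [hpos i]
    · intro j _ hj
      refine Finset.sum_eq_zero fun k _ => ?_
      rw [hzero i j hj, mul_zero, zero_mul]
    · intro h; exact absurd (Finset.mem_univ _) h
  calc ∑ i, ∑ j, ∑ k, ∑ l, c i j k l * permCoup n σ i j * permCoup n σ k l
      = ∑ i, ∑ j, ∑ k, c i j k (σ k) * permCoup n σ i j * (n : ℝ)⁻¹ :=
        Finset.sum_congr rfl fun i _ => Finset.sum_congr rfl fun j _ =>
          Finset.sum_congr rfl fun k _ => stepl i j k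
    _ = ∑ i, ∑ k, c i (σ i) k (σ k) * (n : ℝ)⁻¹ * (n : ℝ)⁻¹ :=
        Finset.sum_congr rfl fun i _ => stepj i
    _ = (1 / (n : ℝ) ^ 2) * ∑ i, ∑ k, c i (σ i) k (σ k) := by
        rw [Finset.mul_sum]
        refine Finset.sum_congr rfl fun i _ => ?_
        rw [Finset.mul_sum]
        refine Finset.sum_congr rfl fun k _ => ?_
        rw [sq]
        by_cases hn0 : (n : ℝ) = 0
        · simp [hn0]
        · field_simp

lemma coupling_decomp {n : ℕ} (hn : 0 < n) (π : Fin n → Fin n → ℝ)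
    (h0 : ∀ i j, 0 ≤ π i j) (h1 : ∀ i, ∑ j, π i j = 1 / n) (h2 : ∀ j, ∑ i, π i j = 1 / n) :
    ∃ w : Equiv.Perm (Fin n) → ℝ, (∀ σ, 0 ≤ w σ) ∧ (∑ σ, w σ = 1) ∧
      ∀ i j, π i j = ∑ σ, w σ * permCoup n σ i j := by
  have hne : (n : ℝ) ≠ 0 := Nat.cast_ne_zero.2 hn.ne'
  set M : Matrix (Fin n) (Fin n) ℝ := Matrix.of (fun i j => (n : ℝ) * π i j) with hM
  have hMds : M ∈ doublyStochastic ℝ (Fin n) := by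
    rw [mem_doublyStochastic_iff_sum]
    refine ⟨fun i j => mul_nonneg (Nat.cast_nonneg n) (h0 i j), fun i => ?_, fun j => ?_⟩
    · show ∑ j, (n : ℝ) * π i j = 1
      rw [← Finset.mul_sum, h1 i]; field_simp
    · show ∑ i, (n : ℝ) * π i j = 1
      rw [← Finset.mul_sum, h2 j]; field_simp
  obtain ⟨w, hw0, hw1, hwM⟩ := exists_eq_sum_perm_of_mem_doublyStochastic hMds
  refine ⟨w, hw0, hw1, fun i j => ?_⟩
  have hsum : (∑ σ : Equiv.Perm (Fin n), w σ • Equiv.Perm.permMatrix ℝ σ) i j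
      = ∑ σ : Equiv.Perm (Fin n), w σ * (σ.permMatrix ℝ) i j := by
    simp [Matrix.sum_apply, Matrix.smul_apply, smul_eq_mul]
  have hent : ∑ σ : Equiv.Perm (Fin n), w σ * (σ.permMatrix ℝ) i j = (n : ℝ) * π i j := by
    rw [← hsum, hwM]; rfl
  have hperm : ∀ σ : Equiv.Perm (Fin n), (σ.permMatrix ℝ) i j = if σ i = j then 1 else 0 := by
    intro σ
    simp [Equiv.Perm.permMatrix, PEquiv.toMatrix_apply, Equiv.toPEquiv_apply]
  have : ∑ σ : Equiv.Perm (Fin n), w σ * permCoup n σ i j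
      = (n : ℝ)⁻¹ * ∑ σ : Equiv.Perm (Fin n), w σ * (σ.permMatrix ℝ) i j := by
    rw [Finset.mul_sum]
    refine Finset.sum_congr rfl fun σ _ => ?_
    rw [hperm σ]
    unfold permCoup
    by_cases h : σ i = j <;> simp [h, mul_comm]
  rw [this, hent, ← mul_assoc, inv_mul_cancel₀ hne, one_mul]

lemma norm_sq_coord {p : ℕ} (u : EuclideanSpace ℝ (Fin p)) : ‖u‖ ^ 2 = ∑ α, u α ^ 2 := by
  rw [EuclideanSpace.norm_eq, Real.sq_sqrt (Finset.sum_nonneg fun α _ => sq_nonneg _)]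
  exact Finset.sum_congr rfl fun α _ => by rw [Real.norm_eq_abs, sq_abs]

lemma gw_eq_gm_abstract {n : ℕ} (hn : 0 < n) (c : Fin n → Fin n → Fin n → Fin n → ℝ)
    (hsymm : ∀ i j k l, c k l i j = c i j k l)
    (hneg : ∀ δ : Fin n → Fin n → ℝ, (∀ i, ∑ j, δ i j = 0) → (∀ j, ∑ i, δ i j = 0) →
      ∑ i, ∑ j, ∑ k, ∑ l, c i j k l * δ i j * δ k l ≤ 0)
    (hcnn : ∀ i j k l, 0 ≤ c i j k l) :
    sInf {v : ℝ | ∃ π : Fin n → Fin n → ℝ,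
        (∀ i j, 0 ≤ π i j) ∧ (∀ i, ∑ j : Fin n, π i j = 1 / n) ∧
        (∀ j, ∑ i : Fin n, π i j = 1 / n) ∧
        v = ∑ i : Fin n, ∑ j : Fin n, ∑ k : Fin n, ∑ l : Fin n,
              c i j k l * π i j * π k l} =
    sInf {v : ℝ | ∃ σ : Equiv.Perm (Fin n),
        v = (1 / (n : ℝ) ^ 2) * ∑ i : Fin n, ∑ k : Fin n, c i (σ i) k (σ k)} := by
  set S1 := {v : ℝ | ∃ π : Fin n → Fin n → ℝ,
        (∀ i j, 0 ≤ π i j) ∧ (∀ i, ∑ j : Fin n, π i j = 1 / n) ∧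
        (∀ j, ∑ i : Fin n, π i j = 1 / n) ∧
        v = ∑ i : Fin n, ∑ j : Fin n, ∑ k : Fin n, ∑ l : Fin n,
              c i j k l * π i j * π k l} with hS1
  set S2 := {v : ℝ | ∃ σ : Equiv.Perm (Fin n),
        v = (1 / (n : ℝ) ^ 2) * ∑ i : Fin n, ∑ k : Fin n, c i (σ i) k (σ k)} with hS2
  have hsub : S2 ⊆ S1 := by
    rintro v ⟨σ, rfl⟩
    exact ⟨permCoup n σ, fun i j => permCoup_nonneg σ i j, permCoup_row σ, permCoup_col σ,
      (permCoup_f c σ).symm⟩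
  have hS2ne : S2.Nonempty := ⟨_, ⟨1, rfl⟩⟩
  have hS1ne : S1.Nonempty := ⟨_, hsub hS2ne.choose_spec⟩
  have hS1bdd : BddBelow S1 := by
    refine ⟨0, fun v hv => ?_⟩
    obtain ⟨π, h0, _, _, rfl⟩ := hv
    exact Finset.sum_nonneg fun i _ => Finset.sum_nonneg fun j _ =>
      Finset.sum_nonneg fun k _ => Finset.sum_nonneg fun l _ =>
        mul_nonneg (mul_nonneg (hcnn i j k l) (h0 i j)) (h0 k l)
  have hS2bdd : BddBelow S2 := by
    refine ⟨0, fun v hv => ?_⟩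
    obtain ⟨σ, rfl⟩ := hv
    exact mul_nonneg (by positivity) (Finset.sum_nonneg fun i _ =>
      Finset.sum_nonneg fun k _ => hcnn i (σ i) k (σ k))
  have key : ∀ v ∈ S1, ∃ σ : Equiv.Perm (Fin n),
      (1 / (n : ℝ) ^ 2) * ∑ i, ∑ k, c i (σ i) k (σ k) ≤ v := by
    rintro v ⟨π, h0, h1, h2, rfl⟩
    obtain ⟨w, hw0, hw1, hπ⟩ := coupling_decomp hn π h0 h1 h2
    have jensen := jensen_quad c hsymm hneg w hw0 hw1 (permCoup n)
      (fun σ i => permCoup_row σ i) (fun σ j => permCoup_col σ j) π hπ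
    obtain ⟨σs, _, hmin⟩ := Finset.exists_min_image Finset.univ
      (fun σ : Equiv.Perm (Fin n) =>
        ∑ i, ∑ j, ∑ k, ∑ l, c i j k l * permCoup n σ i j * permCoup n σ k l)
      ⟨1, Finset.mem_univ 1⟩
    refine ⟨σs, ?_⟩
    rw [← permCoup_f c σs]
    calc ∑ i, ∑ j, ∑ k, ∑ l, c i j k l * permCoup n σs i j * permCoup n σs k l
        = (∑ σ : Equiv.Perm (Fin n), w σ)
            * ∑ i, ∑ j, ∑ k, ∑ l, c i j k l * permCoup n σs i j * permCoup n σs k l := by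
          rw [hw1, one_mul]
      _ = ∑ σ : Equiv.Perm (Fin n), w σ
            * ∑ i, ∑ j, ∑ k, ∑ l, c i j k l * permCoup n σs i j * permCoup n σs k l :=
          Finset.sum_mul _ _ _
      _ ≤ ∑ σ : Equiv.Perm (Fin n), w σ
            * ∑ i, ∑ j, ∑ k, ∑ l, c i j k l * permCoup n σ i j * permCoup n σ k l :=
          Finset.sum_le_sum fun σ _ =>
            mul_le_mul_of_nonneg_left (hmin σ (Finset.mem_univ σ)) (hw0 σ)
      _ ≤ ∑ i, ∑ j, ∑ k, ∑ l, c i j k l * π i j * π k l := jensen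
  refine le_antisymm (csInf_le_csInf hS1bdd hS2ne hsub) (le_csInf hS1ne fun v hv => ?_)
  obtain ⟨σ, hσ⟩ := key v hv
  exact (csInf_le hS2bdd ⟨σ, rfl⟩).trans hσ

/-- **Equivalence between GW and GM for discrete measures with squared Euclidean costs.**
For points `x₁,…,xₙ ∈ ℝ^p`, `y₁,…,yₙ ∈ ℝ^q` and uniform weights, the Gromov–Wasserstein
minimum over couplings `π ∈ Πₙ` (nonnegative matrices whose row and column sums all equal
`1/n`) of `∑ i j k l, (‖x i - x k‖² - ‖y j - y l‖²)² π i j π k l` equals the Gromov–Monge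
minimum over permutations of `(1/n²) ∑ i k, (‖x i - x k‖² - ‖y (σ i) - y (σ k)‖²)²`. -/
theorem gw_eq_gm_euclidean (n p q : ℕ) (hn : 0 < n)
    (x : Fin n → EuclideanSpace ℝ (Fin p)) (y : Fin n → EuclideanSpace ℝ (Fin q)) :
    sInf {v : ℝ | ∃ π : Fin n → Fin n → ℝ,
        (∀ i j, 0 ≤ π i j) ∧ (∀ i, ∑ j : Fin n, π i j = 1 / n) ∧
        (∀ j, ∑ i : Fin n, π i j = 1 / n) ∧
        v = ∑ i : Fin n, ∑ j : Fin n, ∑ k : Fin n, ∑ l : Fin n,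
              (‖x i - x k‖ ^ 2 - ‖y j - y l‖ ^ 2) ^ 2 * π i j * π k l} =
    sInf {v : ℝ | ∃ σ : Equiv.Perm (Fin n),
        v = (1 / (n : ℝ) ^ 2) *
              ∑ i : Fin n, ∑ k : Fin n, (‖x i - x k‖ ^ 2 - ‖y (σ i) - y (σ k)‖ ^ 2) ^ 2} := by
  have hcc : ∀ i j k l : Fin n, (‖x i - x k‖ ^ 2 - ‖y j - y l‖ ^ 2) ^ 2
      = ((∑ α, (x i α - x k α) ^ 2) - (∑ β, (y j β - y l β) ^ 2)) ^ 2 := by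
    intro i j k l
    rw [norm_sq_coord (x i - x k), norm_sq_coord (y j - y l)]
    rfl
  refine gw_eq_gm_abstract hn
    (fun i j k l => (‖x i - x k‖ ^ 2 - ‖y j - y l‖ ^ 2) ^ 2) ?_ ?_ ?_
  · intro i j k l
    show (‖x k - x i‖ ^ 2 - ‖y l - y j‖ ^ 2) ^ 2 = (‖x i - x k‖ ^ 2 - ‖y j - y l‖ ^ 2) ^ 2
    rw [norm_sub_rev (x k) (x i), norm_sub_rev (y l) (y j)]
  · intro δ hr hcz
    have H := key_neg (fun i α => x i α) (fun j β => y j β) δ hr hcz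
    calc ∑ i, ∑ j, ∑ k, ∑ l, (‖x i - x k‖ ^ 2 - ‖y j - y l‖ ^ 2) ^ 2 * δ i j * δ k l
        = ∑ i, ∑ j, ∑ k, ∑ l,
            ((∑ α, (x i α - x k α) ^ 2) - (∑ β, (y j β - y l β) ^ 2)) ^ 2 * δ i j * δ k l :=
          Finset.sum_congr rfl fun i _ => Finset.sum_congr rfl fun j _ =>
            Finset.sum_congr rfl fun k _ => Finset.sum_congr rfl fun l _ => by rw [hcc]
      _ ≤ 0 := H
  · intro i j k l
    exact sq_nonneg _
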